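/- Let U, V ⊆ ℂ be open sets, let p, q : ℂ → ℂ with p differentiable on U, and let Ψ : ℂ → ℂ be twice differentiable on U and satisfy Ψ''(x) + p(x)·Ψ'(x) + q(x)·Ψ(x) = 0 for all x ∈ U. Let z : ℂ → ℂ be three times differentiable on U with z'(x) ≠ 0 for all x ∈ U and z(U) ⊆ V; let h : ℂ → ℂ be differentiable on U with h'(x) = p(x)/2 on U; let g : ℂ → ℂ be differentiable on U with g(x)² = z'(x) on U; and let ψ : ℂ → ℂ be twice differentiable on V with ψ(z(x)) = g(x)·exp(h(x))·Ψ(x) for all x ∈ U. Then for every x ∈ U, ψ''(z(x)) = (1/2)·[ z'''(x)/z'(x)³ − (3/2)·z''(x)²/z'(x)⁴ + (p'(x) + p(x)²/2 − 2·q(x))/z'(x)² ]·ψ(z(x)). -/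

import Mathlib

open Complex

theorem canonical_normal_form_change_of_variables
    (U V : Set ℂ) (hU : IsOpen U) (hV : IsOpen V)
    (p q Ψ z h g ψ : ℂ → ℂ)
    (hp : ∀ x ∈ U, DifferentiableAt ℂ p x)
    (hΨ1 : ∀ x ∈ U, DifferentiableAt ℂ Ψ x)
    (hΨ2 : ∀ x ∈ U, DifferentiableAt ℂ (deriv Ψ) x)
    (hode : ∀ x ∈ U, deriv (deriv Ψ) x + p x * deriv Ψ x + q x * Ψ x = 0)
    (hz1 : ∀ x ∈ U, DifferentiableAt ℂ z x)
    (hz2 : ∀ x ∈ U, DifferentiableAt ℂ (deriv z) x)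
    (hz3 : ∀ x ∈ U, DifferentiableAt ℂ (deriv (deriv z)) x)
    (hz0 : ∀ x ∈ U, deriv z x ≠ 0)
    (hzV : Set.MapsTo z U V)
    (hh : ∀ x ∈ U, DifferentiableAt ℂ h x)
    (hh' : ∀ x ∈ U, deriv h x = p x / 2)
    (hg : ∀ x ∈ U, DifferentiableAt ℂ g x)
    (hg2 : ∀ x ∈ U, g x ^ 2 = deriv z x)
    (hψ1 : ∀ w ∈ V, DifferentiableAt ℂ ψ w)
    (hψ2 : ∀ w ∈ V, DifferentiableAt ℂ (deriv ψ) w)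
    (hrel : ∀ x ∈ U, ψ (z x) = g x * Complex.exp (h x) * Ψ x) :
    ∀ x ∈ U,
      deriv (deriv ψ) (z x) =
        (1 / 2) * (deriv (deriv (deriv z)) x / (deriv z x) ^ 3
          - (3 / 2) * (deriv (deriv z) x) ^ 2 / (deriv z x) ^ 4
          + (deriv p x + (p x) ^ 2 / 2 - 2 * q x) / (deriv z x) ^ 2) * ψ (z x) := by
  intro x hx
  have hgne : ∀ y ∈ U, g y ≠ 0 := by
    intro y hy hy0
    exact hz0 y hy (by rw [← hg2 y hy, hy0]; ring)
  have hGne : g x ≠ 0 := hgne x hx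
  -- exp ∘ h
  have hE : ∀ y ∈ U, DifferentiableAt ℂ (fun t => Complex.exp (h t)) y :=
    fun y hy => (hh y hy).cexp
  have hE' : ∀ y ∈ U, deriv (fun t => Complex.exp (h t)) y
      = Complex.exp (h y) * (p y / 2) := by
    intro y hy
    rw [deriv_cexp (hh y hy), hh' y hy]
  -- 2 g g' = z''
  have hgg : ∀ y ∈ U, 2 * g y * deriv g y = deriv (deriv z) y := by
    intro y hy
    have e1 : (fun t => g t ^ 2) =ᶠ[nhds y] deriv z := by
      filter_upwards [hU.mem_nhds hy] with t ht using hg2 t ht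
    have h2 := e1.deriv_eq
    rw [deriv_fun_pow (hg y hy) 2] at h2
    norm_num at h2
    linear_combination h2
  -- deriv g is differentiable at x
  have hdgx : DifferentiableAt ℂ (deriv g) x := by
    have e : deriv g =ᶠ[nhds x] fun t => deriv (deriv z) t / (2 * g t) := by
      filter_upwards [hU.mem_nhds hx] with t ht
      rw [eq_div_iff (mul_ne_zero two_ne_zero (hgne t ht))]
      linear_combination hgg t ht
    exact ((hz3 x hx).div ((differentiableAt_const (2:ℂ)).mul (hg x hx))
      (mul_ne_zero two_ne_zero hGne)).congr_of_eventuallyEq e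
  -- 2*(g'^2 + g*g'') = z'''
  have f3 : 2 * (deriv g x * deriv g x + g x * deriv (deriv g) x)
      = deriv (deriv (deriv z)) x := by
    have e : (fun t => 2 * (g t * deriv g t)) =ᶠ[nhds x] deriv (deriv z) := by
      filter_upwards [hU.mem_nhds hx] with t ht
      linear_combination hgg t ht
    have h2 := e.deriv_eq
    rw [deriv_const_mul (d := fun t => g t * deriv g t) 2 ((hg x hx).mul hdgx), deriv_fun_mul (hg x hx) hdgx] at h2
    linear_combination h2
  -- first derivative identity on U
  have hstep1 : ∀ y ∈ U, deriv ψ (z y) * deriv z y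
      = (deriv g y * Complex.exp (h y) + g y * (Complex.exp (h y) * (p y / 2))) * Ψ y
        + g y * Complex.exp (h y) * deriv Ψ y := by
    intro y hy
    have eF : (fun t => ψ (z t)) =ᶠ[nhds y] fun t => g t * Complex.exp (h t) * Ψ t := by
      filter_upwards [hU.mem_nhds hy] with t ht using hrel t ht
    have h1 := eF.deriv_eq
    rw [deriv_fun_mul ((hg y hy).fun_mul (hE y hy)) (hΨ1 y hy),
        deriv_fun_mul (hg y hy) (hE y hy), hE' y hy] at h1
    rw [← h1]
    exact (deriv_comp (x := y) (hψ1 _ (hzV hy)) (hz1 y hy)).symm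
  -- differentiate the first-derivative identity at x
  have hLdiff : DifferentiableAt ℂ (fun t => deriv ψ (z t)) x :=
    (hψ2 _ (hzV hx)).comp x (hz1 x hx)
  have hLder : deriv (fun t => deriv ψ (z t)) x = deriv (deriv ψ) (z x) * deriv z x :=
    deriv_comp (x := x) (hψ2 _ (hzV hx)) (hz1 x hx)
  have eBA : (fun t => deriv ψ (z t) * deriv z t) =ᶠ[nhds x]
      fun t => (deriv g t * Complex.exp (h t) + g t * (Complex.exp (h t) * (p t / 2))) * Ψ t
        + g t * Complex.exp (h t) * deriv Ψ t := by
    filter_upwards [hU.mem_nhds hx] with t ht using hstep1 t ht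
  have key := eBA.deriv_eq
  have hdP2 : DifferentiableAt ℂ (fun t => p t / 2) x := (hp x hx).div_const 2
  have hT1 : DifferentiableAt ℂ (fun t => deriv g t * Complex.exp (h t)) x :=
    hdgx.mul (hE x hx)
  have hEP : DifferentiableAt ℂ (fun t => Complex.exp (h t) * (p t / 2)) x :=
    (hE x hx).mul hdP2
  have hT2 : DifferentiableAt ℂ (fun t => g t * (Complex.exp (h t) * (p t / 2))) x :=
    (hg x hx).mul hEP
  have hT3 : DifferentiableAt ℂ (fun t => g t * Complex.exp (h t)) x :=
    (hg x hx).mul (hE x hx)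
  rw [deriv_fun_mul hLdiff (hz2 x hx), hLder,
      deriv_fun_add ((hT1.fun_add hT2).fun_mul (hΨ1 x hx)) (hT3.fun_mul (hΨ2 x hx)),
      deriv_fun_mul (hT1.fun_add hT2) (hΨ1 x hx),
      deriv_fun_add hT1 hT2,
      deriv_fun_mul hdgx (hE x hx),
      deriv_fun_mul (hg x hx) hEP,
      deriv_fun_mul (hE x hx) hdP2,
      deriv_fun_mul hT3 (hΨ2 x hx),
      deriv_fun_mul (hg x hx) (hE x hx),
      hE' x hx, deriv_div_const] at key
  -- eliminate Ψ'' by the ODE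
  have hPs2 : deriv (deriv Ψ) x = -(p x * deriv Ψ x) - q x * Ψ x := by
    linear_combination hode x hx
  rw [hPs2] at key
  -- replace derivatives of z by g-expressions
  have hZ1 : deriv z x = g x ^ 2 := (hg2 x hx).symm
  have hZ2 : deriv (deriv z) x = 2 * g x * deriv g x := (hgg x hx).symm
  have hZ3 : deriv (deriv (deriv z)) x
      = 2 * (deriv g x * deriv g x + g x * deriv (deriv g) x) := f3.symm
  have hW1 := hstep1 x hx
  rw [hZ1, hZ2] at key
  rw [hZ1] at hW1
  -- solve for the second derivative of ψ
  have hW2 : deriv (deriv ψ) (z x)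
      = ((2 * (deriv g x * deriv g x + g x * deriv (deriv g) x) * g x ^ 2
          - (3 / 2) * (2 * g x * deriv g x) ^ 2
          + (deriv p x + (p x) ^ 2 / 2 - 2 * q x) * g x ^ 4)
          * (g x * Complex.exp (h x) * Ψ x)) / (2 * g x ^ 8) := by
    rw [eq_div_iff (mul_ne_zero two_ne_zero (pow_ne_zero 8 hGne))]
    linear_combination (2 * g x ^ 4) * key - 4 * g x ^ 3 * deriv g x * hW1
  rw [hrel x hx, hZ1, hZ2, hZ3, hW2]
  have h8 : (2 : ℂ) * g x ^ 8 ≠ 0 := mul_ne_zero two_ne_zero (pow_ne_zero 8 hGne)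
  rw [div_eq_iff h8]
  have e2 : (deriv z x)^2 = (g x ^ 2)^2 := by rw [hZ1]
  field_simp [hGne]
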